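/- arXiv:1203.2979 — 2 statements merged into one kernel-verified Lean document; each statement's English description precedes it below -/
import Mathlib

section
/- Let R(k,k') = 16 sin²(πk) sin²(πk')(sin²(π(k+k')) + sin²(π(k-k'))) and suppose f ∈ L²(T) satisfies ∫_T R(k,k')(f(k') - f(k)) dk' = 0 for a.e. k. Then f is constant almost everywhere on T. -/
open MeasureTheory Set Real

noncomputable def sfun (x : ℝ) : ℝ := Real.sin (π * x) ^ 2
noncomputable def cfun (x : ℝ) : ℝ := Real.cos (2 * π * x)

lemma sfun_cont : Continuous sfun := by unfold sfun; fun_prop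
lemma cfun_cont : Continuous cfun := by unfold cfun; fun_prop

lemma cfun_bounds (x : ℝ) : -1 ≤ cfun x ∧ cfun x ≤ 1 :=
  ⟨Real.neg_one_le_cos _, Real.cos_le_one _⟩

lemma two_add_cfun_pos (x : ℝ) : 0 < 2 + cfun x := by
  have := (cfun_bounds x).1; linarith

lemma sfun_eq (x : ℝ) : sfun x = 1/2 - cfun x / 2 := by
  unfold sfun cfun
  rw [Real.sin_sq, show 2*π*x = 2*(π*x) by ring, Real.cos_sq]
  ring

lemma my_integral_cos_mul (c a b : ℝ) (hc : c ≠ 0) :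
    ∫ x in a..b, Real.cos (c * x) = (Real.sin (c * b) - Real.sin (c * a)) / c := by
  have h : ∀ x ∈ uIcc a b, HasDerivAt (fun y => Real.sin (c * y) / c) (Real.cos (c * x)) x := by
    intro x _
    have h1 : HasDerivAt (fun y => Real.sin (c * y)) (Real.cos (c * x) * c) x := by
      simpa [Function.comp_def] using (Real.hasDerivAt_sin (c * x)).comp x ((hasDerivAt_id x).const_mul c)
    simpa [mul_div_assoc, mul_div_cancel_right₀ _ hc] using h1.div_const c
  rw [intervalIntegral.integral_eq_sub_of_hasDerivAt h
    ((Real.continuous_cos.comp (continuous_const.mul continuous_id)).intervalIntegrable a b)]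
  ring

lemma int_cos2 : ∫ x in (-(1:ℝ)/2)..(1/2), Real.cos (2*π*x) = 0 := by
  rw [my_integral_cos_mul (2*π) _ _ (by positivity),
    show 2*π*((1:ℝ)/2) = π by ring, show 2*π*(-(1:ℝ)/2) = -π by ring,
    Real.sin_pi, Real.sin_neg, Real.sin_pi]
  simp

lemma int_cos4 : ∫ x in (-(1:ℝ)/2)..(1/2), Real.cos (4*π*x) = 0 := by
  rw [my_integral_cos_mul (4*π) _ _ (by positivity),
    show 4*π*((1:ℝ)/2) = 2*π by ring, show 4*π*(-(1:ℝ)/2) = -(2*π) by ring,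
    Real.sin_neg, Real.sin_two_pi]
  simp

lemma int_s : ∫ x in (-(1:ℝ)/2)..(1/2), sfun x = 1/2 := by
  have h : ∀ x, sfun x = 1/2 - (1/2) * Real.cos (2*π*x) := by
    intro x; rw [sfun_eq]; unfold cfun; ring
  simp_rw [h]
  rw [intervalIntegral.integral_sub (by apply Continuous.intervalIntegrable; fun_prop)
      (by apply Continuous.intervalIntegrable; fun_prop),
    intervalIntegral.integral_const_mul, int_cos2]
  simp; norm_num

lemma int_sc : ∫ x in (-(1:ℝ)/2)..(1/2), sfun x * cfun x = -(1/4) := by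
  have h : ∀ x, sfun x * cfun x
      = -(1/4) + (1/2) * Real.cos (2*π*x) - (1/4) * Real.cos (4*π*x) := by
    intro x
    have h2 : Real.cos (2*π*x) ^ 2 = 1/2 + Real.cos (4*π*x)/2 := by
      rw [show 4*π*x = 2*(2*π*x) by ring, Real.cos_sq]
    rw [sfun_eq]; unfold cfun; nlinarith [h2]
  simp_rw [h]
  rw [intervalIntegral.integral_sub (by apply Continuous.intervalIntegrable; fun_prop)
      (by apply Continuous.intervalIntegrable; fun_prop),
    intervalIntegral.integral_add (by apply Continuous.intervalIntegrable; fun_prop)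
      (by apply Continuous.intervalIntegrable; fun_prop),
    intervalIntegral.integral_const_mul, intervalIntegral.integral_const_mul, int_cos2, int_cos4]
  simp; norm_num

lemma kernel_eq (k k' : ℝ) :
    Real.sin (π * (k + k')) ^ 2 + Real.sin (π * (k - k')) ^ 2 = 1 - cfun k * cfun k' := by
  have h1 : Real.sin (π*(k+k'))^2 = 1/2 - Real.cos (2*π*(k+k'))/2 := by
    have := sfun_eq (k+k'); unfold sfun cfun at this; exact this
  have h2 : Real.sin (π*(k-k'))^2 = 1/2 - Real.cos (2*π*(k-k'))/2 := by
    have := sfun_eq (k-k'); unfold sfun cfun at this; exact this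
  rw [h1, h2, show 2*π*(k+k') = 2*π*k + 2*π*k' by ring,
    show 2*π*(k-k') = 2*π*k - 2*π*k' by ring, Real.cos_add, Real.cos_sub]
  unfold cfun
  ring

-- the function sfun x * cfun x / (2 + cfun x)
noncomputable def gfun (x : ℝ) : ℝ := sfun x * cfun x / (2 + cfun x)

lemma gfun_cont : Continuous gfun := by
  apply (sfun_cont.mul cfun_cont).div (continuous_const.add cfun_cont)
  intro x; exact (two_add_cfun_pos x).ne'

lemma gfun_even (x : ℝ) : gfun (-x) = gfun x := by
  unfold gfun sfun cfun
  simp [mul_neg, Real.sin_neg, Real.cos_neg]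

lemma gfun_reflect_neg : ∀ x ∈ Ioo (0:ℝ) (1/4), gfun x + gfun (1/2 - x) < 0 := by
  intro x hx
  have hS : 0 < Real.sin (π * x) := by
    apply Real.sin_pos_of_pos_of_lt_pi
    · exact mul_pos Real.pi_pos hx.1
    · nlinarith [Real.pi_pos, hx.2]
  have hc : 0 < cfun x := by
    unfold cfun
    apply Real.cos_pos_of_mem_Ioo
    constructor
    · nlinarith [Real.pi_pos, hx.1]
    · nlinarith [Real.pi_pos, hx.2]
  have hce : cfun x = 1 - 2 * sfun x := by have := sfun_eq x; linarith
  have hs1 : sfun (1/2 - x) = 1 - sfun x := by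
    unfold sfun
    rw [show π * (1/2 - x) = π/2 - π * x by ring, Real.sin_pi_div_two_sub]
    nlinarith [Real.sin_sq_add_cos_sq (π * x)]
  have hc1 : cfun (1/2 - x) = -cfun x := by
    unfold cfun
    rw [show 2*π*(1/2 - x) = π - 2*π*x by ring, Real.cos_pi_sub]
  unfold gfun
  rw [hs1, hc1]
  have d1 : (0:ℝ) < 2 + cfun x := two_add_cfun_pos x
  have d2 : (0:ℝ) < 2 + -cfun x := by have := (cfun_bounds x).2; linarith
  rw [div_add_div _ _ d1.ne' d2.ne']
  apply div_neg_of_neg_of_pos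
  · have hS' : 0 < sfun x := by unfold sfun; positivity
    nlinarith [hc, hS', hce]
  · positivity

lemma K_neg : ∫ x in (-(1:ℝ)/2)..(1/2), gfun x < 0 := by
  have hii : ∀ a b : ℝ, IntervalIntegrable gfun volume a b :=
    fun a b => gfun_cont.intervalIntegrable a b
  have hsplit : ∫ x in (-(1:ℝ)/2)..(1/2), gfun x
      = (∫ x in (-(1:ℝ)/2)..(0:ℝ), gfun x) + ∫ x in (0:ℝ)..(1/2:ℝ), gfun x :=
    (intervalIntegral.integral_add_adjacent_intervals (hii _ _) (hii _ _)).symm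
  have heven : (∫ x in (-(1:ℝ)/2)..(0:ℝ), gfun x) = ∫ x in (0:ℝ)..(1/2:ℝ), gfun x := by
    have h := intervalIntegral.integral_comp_neg gfun (a := (0:ℝ)) (b := (1/2:ℝ))
    simp_rw [gfun_even] at h
    rw [h]
    congr 1 <;> norm_num
  have hsplit2 : ∫ x in (0:ℝ)..(1/2:ℝ), gfun x
      = (∫ x in (0:ℝ)..(1/4:ℝ), gfun x) + ∫ x in (1/4:ℝ)..(1/2:ℝ), gfun x :=
    (intervalIntegral.integral_add_adjacent_intervals (hii _ _) (hii _ _)).symm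
  have hrefl : ∫ x in (1/4:ℝ)..(1/2:ℝ), gfun x = ∫ x in (0:ℝ)..(1/4:ℝ), gfun (1/2 - x) := by
    rw [intervalIntegral.integral_comp_sub_left gfun (1/2)]
    congr 1 <;> norm_num
  have hcomb : (∫ x in (0:ℝ)..(1/4:ℝ), gfun x) + (∫ x in (0:ℝ)..(1/4:ℝ), gfun (1/2 - x))
      = ∫ x in (0:ℝ)..(1/4:ℝ), (gfun x + gfun (1/2 - x)) :=
    (intervalIntegral.integral_add (hii _ _)
      ((gfun_cont.comp (continuous_const.sub continuous_id)).intervalIntegrable _ _)).symm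
  have hneg : ∫ x in (0:ℝ)..(1/4:ℝ), (gfun x + gfun (1/2 - x)) < 0 := by
    have hpos : 0 < ∫ x in (0:ℝ)..(1/4:ℝ), -(gfun x + gfun (1/2 - x)) := by
      apply intervalIntegral.intervalIntegral_pos_of_pos_on
      · exact ((gfun_cont.add (gfun_cont.comp (continuous_const.sub continuous_id))).neg).intervalIntegrable _ _
      · intro x hx
        have := gfun_reflect_neg x hx
        linarith
      · norm_num
    rw [intervalIntegral.integral_neg] at hpos
    linarith
  rw [hsplit, heven, hsplit2, hrefl, hcomb]
  linarith

lemma sin_pi_ne_ae : ∀ᵐ x ∂(volume : Measure ℝ), Real.sin (π * x) ≠ 0 := by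
  have hz : {x : ℝ | Real.sin (π * x) = 0} ⊆ Set.range (fun n : ℤ => (n : ℝ)) := by
    intro x hx
    simp only [mem_setOf_eq] at hx
    rw [Real.sin_eq_zero_iff] at hx
    obtain ⟨n, hn⟩ := hx
    refine ⟨n, ?_⟩
    have hx' : π * (n:ℝ) = π * x := by linear_combination hn
    exact mul_left_cancel₀ Real.pi_ne_zero hx'
  have hcz : volume {x : ℝ | Real.sin (π * x) = 0} = 0 :=
    measure_mono_null hz ((Set.countable_range _).measure_zero _)
  rw [ae_iff]
  simpa using hcz

/-- If f ∈ L²(T) satisfies ∫ R(k,k')(f(k') - f(k)) dk' = 0 for a.e. k, where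
R(k,k') = 16 sin²(πk) sin²(πk')(sin²(π(k+k')) + sin²(π(k-k'))), then f is
constant almost everywhere on the torus T = [-1/2,1/2]. -/
theorem kernel_of_scattering_operator_is_constants
    (R : ℝ → ℝ → ℝ)
    (hR : ∀ k k' : ℝ, R k k' = 16 * Real.sin (π * k) ^ 2 * Real.sin (π * k') ^ 2
        * (Real.sin (π * (k + k')) ^ 2 + Real.sin (π * (k - k')) ^ 2))
    (f : ℝ → ℝ)
    (hf : MemLp f 2 (volume.restrict (Ioc (-(1:ℝ)/2) (1/2))))
    (hker : ∀ᵐ k ∂(volume.restrict (Ioc (-(1:ℝ)/2) (1/2))),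
        ∫ k' in Ioc (-(1:ℝ)/2) (1/2), R k k' * (f k' - f k) = 0) :
    ∃ c : ℝ, ∀ᵐ k ∂(volume.restrict (Ioc (-(1:ℝ)/2) (1/2))), f k = c := by
  set T : Set ℝ := Ioc (-(1:ℝ)/2) (1/2) with hT
  set μ : Measure ℝ := volume.restrict T with hμ
  haveI : IsFiniteMeasure μ := by
    constructor
    rw [hμ, Measure.restrict_apply_univ]
    exact measure_Ioc_lt_top
  have hle : (-(1:ℝ)/2) ≤ 1/2 := by norm_num
  -- integrability
  have hfi : Integrable f μ := hf.integrable (by norm_num)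
  have hsm : Integrable (fun x => sfun x * f x) μ := by
    apply hfi.bdd_mul (c := 1) (sfun_cont.aestronglyMeasurable)
    refine Filter.Eventually.of_forall fun x => ?_
    have := Real.neg_one_le_sin (π*x); have := Real.sin_le_one (π*x)
    simp only [sfun, Real.norm_eq_abs, abs_le]
    constructor <;> nlinarith
  have hscm : Integrable (fun x => (sfun x * cfun x) * f x) μ := by
    apply hfi.bdd_mul (c := 1) ((sfun_cont.mul cfun_cont).aestronglyMeasurable)
    refine Filter.Eventually.of_forall fun x => ?_
    have h1 := Real.neg_one_le_sin (π*x); have h2 := Real.sin_le_one (π*x)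
    have h3 := (cfun_bounds x).1; have h4 := (cfun_bounds x).2
    simp only [Pi.mul_apply, sfun, Real.norm_eq_abs, abs_le]
    constructor <;> nlinarith
  have hsint : Integrable sfun μ :=
    (sfun_cont.integrableOn_Icc).mono_set Ioc_subset_Icc_self
  have hscint : Integrable (fun x => sfun x * cfun x) μ :=
    ((sfun_cont.mul cfun_cont).integrableOn_Icc).mono_set Ioc_subset_Icc_self
  have hgint : Integrable gfun μ :=
    (gfun_cont.integrableOn_Icc).mono_set Ioc_subset_Icc_self
  -- moments
  set A : ℝ := ∫ x, sfun x * f x ∂μ with hA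
  set B : ℝ := ∫ x, (sfun x * cfun x) * f x ∂μ with hB
  have hs_int : ∫ x, sfun x ∂μ = 1/2 := by
    rw [hμ, hT, ← intervalIntegral.integral_of_le hle]; exact int_s
  have hsc_int : ∫ x, sfun x * cfun x ∂μ = -(1/4) := by
    rw [hμ, hT, ← intervalIntegral.integral_of_le hle]; exact int_sc
  -- evaluate the inner integral
  have hInner : ∀ k, (∫ k', R k k' * (f k' - f k) ∂μ)
      = 16 * sfun k * A - 16 * sfun k * f k * (1/2)
        - 16 * sfun k * cfun k * B + 16 * sfun k * cfun k * f k * (-(1/4)) := by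
    intro k
    have hpt : ∀ x, R k x * (f x - f k)
        = (16 * sfun k) * (sfun x * f x) - (16 * sfun k * f k) * sfun x
          - (16 * sfun k * cfun k) * ((sfun x * cfun x) * f x)
          + (16 * sfun k * cfun k * f k) * (sfun x * cfun x) := by
      intro x
      rw [hR, kernel_eq]
      unfold sfun
      ring
    have hI1 : Integrable (fun x => (16 * sfun k) * (sfun x * f x)) μ := hsm.const_mul _
    have hI2 : Integrable (fun x => (16 * sfun k * f k) * sfun x) μ := hsint.const_mul _
    have hI3 : Integrable (fun x => (16 * sfun k * cfun k) * ((sfun x * cfun x) * f x)) μ :=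
      hscm.const_mul _
    have hI4 : Integrable (fun x => (16 * sfun k * cfun k * f k) * (sfun x * cfun x)) μ :=
      hscint.const_mul _
    have hI12 : Integrable (fun x => (16 * sfun k) * (sfun x * f x)
        - (16 * sfun k * f k) * sfun x) μ := hI1.sub hI2
    have hI123 : Integrable (fun x => (16 * sfun k) * (sfun x * f x)
        - (16 * sfun k * f k) * sfun x
        - (16 * sfun k * cfun k) * ((sfun x * cfun x) * f x)) μ := hI12.sub hI3
    calc (∫ k', R k k' * (f k' - f k) ∂μ)
        = ∫ x, ((16 * sfun k) * (sfun x * f x) - (16 * sfun k * f k) * sfun x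
          - (16 * sfun k * cfun k) * ((sfun x * cfun x) * f x)
          + (16 * sfun k * cfun k * f k) * (sfun x * cfun x)) ∂μ :=
          integral_congr_ae (Filter.Eventually.of_forall fun x => hpt x)
      _ = (16 * sfun k) * A - (16 * sfun k * f k) * (∫ x, sfun x ∂μ)
          - (16 * sfun k * cfun k) * B + (16 * sfun k * cfun k * f k) * (∫ x, sfun x * cfun x ∂μ) := by
          rw [integral_add hI123 hI4, integral_sub hI12 hI3, integral_sub hI1 hI2,
            integral_const_mul, integral_const_mul, integral_const_mul, integral_const_mul]
      _ = _ := by rw [hs_int, hsc_int]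
  -- a.e. linear relation
  have hae_ne : ∀ᵐ k ∂μ, Real.sin (π * k) ≠ 0 := ae_restrict_of_ae sin_pi_ne_ae
  have hlin : ∀ᵐ k ∂μ, (2 + cfun k) * f k = 4 * A - 4 * B * cfun k := by
    filter_upwards [hker, hae_ne] with k hk hne
    rw [hInner k] at hk
    have hsne : sfun k ≠ 0 := pow_ne_zero 2 hne
    have hfac : sfun k * (16 * A - 8 * f k - 16 * cfun k * B - 4 * cfun k * f k) = 0 := by
      linear_combination hk
    have := (mul_eq_zero.mp hfac).resolve_left hsne
    linarith
  -- integrate the relation against sfun * cfun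
  set K : ℝ := ∫ x, gfun x ∂μ with hK
  have hKneg : K < 0 := by
    rw [hK, hμ, hT, ← intervalIntegral.integral_of_le hle]
    exact K_neg
  have hBB : B = B + (4 * A + 8 * B) * K := by
    have hae2 : ∀ᵐ x ∂μ, (sfun x * cfun x) * f x
        = (-4 * B) * (sfun x * cfun x) + (4 * A + 8 * B) * gfun x := by
      filter_upwards [hlin] with x hx
      have hd : (0:ℝ) < 2 + cfun x := two_add_cfun_pos x
      have hfx : f x = (4 * A - 4 * B * cfun x) / (2 + cfun x) := by
        rw [eq_div_iff hd.ne']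
        linear_combination hx
      rw [hfx]
      unfold gfun
      field_simp
      ring
    calc B = ∫ x, ((-4 * B) * (sfun x * cfun x) + (4 * A + 8 * B) * gfun x) ∂μ := by
          rw [hB]; exact integral_congr_ae hae2
      _ = (-4 * B) * (∫ x, sfun x * cfun x ∂μ) + (4 * A + 8 * B) * K := by
          have hJ1 : Integrable (fun x => (-4 * B) * (sfun x * cfun x)) μ := hscint.const_mul _
          have hJ2 : Integrable (fun x => (4 * A + 8 * B) * gfun x) μ := hgint.const_mul _
          rw [integral_add hJ1 hJ2, integral_const_mul, integral_const_mul]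
      _ = B + (4 * A + 8 * B) * K := by rw [hsc_int]; ring
  have hE : 4 * A + 8 * B = 0 := by
    have h0 : (4 * A + 8 * B) * K = 0 := by linarith
    rcases mul_eq_zero.mp h0 with h | h
    · exact h
    · exact absurd h hKneg.ne
  -- conclude
  refine ⟨-4 * B, ?_⟩
  filter_upwards [hlin] with k hk
  have hd : (0:ℝ) < 2 + cfun k := two_add_cfun_pos k
  have : (2 + cfun k) * f k = (2 + cfun k) * (-4 * B) := by
    rw [hk]; linarith [hE]
  have := mul_left_cancel₀ hd.ne' this
  linarith [this]
end

section
/- Let ω(k) = (ω₀²/2 + 2 sin²(πk))^{1/2} with ω₀ > 0. Then for every a with 0 < |a| < 1/2 and σ ∈ {-1,1}, and also for a = 0 and σ = -1, the set {k ∈ T : ω'(k) = σ ω'(k+a)} is finite (in particular has Lebesgue measure zero). -/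
open MeasureTheory Set Real

private lemma analyticAt_csin (z : ℂ) : AnalyticAt ℂ Complex.sin z := by
  have h : Complex.sin = fun z : ℂ =>
      (Complex.exp (-z * Complex.I) - Complex.exp (z * Complex.I)) * Complex.I / 2 := rfl
  rw [h]
  exact ((((analyticAt_id.neg.mul analyticAt_const).cexp.sub
    ((analyticAt_id.mul analyticAt_const).cexp)).mul analyticAt_const).div
    analyticAt_const (by norm_num))

private lemma analyticAt_rsin (x : ℝ) : AnalyticAt ℝ Real.sin x := by
  have h : Real.sin = fun x : ℝ => Complex.reCLM (Complex.sin (Complex.ofRealCLM x)) := by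
    funext y
    simp [← Complex.sin_ofReal_re]
  rw [h]
  exact (Complex.reCLM.analyticAt _).comp
    (((analyticAt_csin _).restrictScalars).comp (Complex.ofRealCLM.analyticAt x))

private lemma analyticAt_rcos (x : ℝ) : AnalyticAt ℝ Real.cos x := by
  have h : Real.cos = fun x : ℝ => Real.sin (x + π/2) := by
    funext y; rw [Real.sin_add_pi_div_two]
  rw [h]
  exact (analyticAt_rsin _).comp (analyticAt_id.add analyticAt_const)

/-- For the dispersion relation ω(k) = (ω₀²/2 + 2 sin²(πk))^{1/2} with ω₀ > 0, for every
(a, σ) with |a| < 1/2, σ = ±1 and (a, σ) ≠ (0, 1), the set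
{k ∈ T : ω'(k) = σ ω'(k+a)} is finite (in particular Lebesgue-null). -/
theorem dispersion_relation_no_resonance
    (ω₀ : ℝ) (hω₀ : 0 < ω₀)
    (ω : ℝ → ℝ)
    (hω : ∀ k, ω k = Real.sqrt (ω₀ ^ 2 / 2 + 2 * Real.sin (π * k) ^ 2)) :
    ∀ a : ℝ, |a| < 1/2 → ∀ σ : ℝ, (σ = 1 ∨ σ = -1) → ¬(a = 0 ∧ σ = 1) →
      Set.Finite {k : ℝ | k ∈ Ioc (-(1:ℝ)/2) (1/2) ∧ deriv ω k = σ * deriv ω (k + a)} := by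
  intro a ha σ hσ hne
  set c : ℝ := ω₀ ^ 2 / 2 with hc_def
  have hc : 0 < c := by positivity
  set h : ℝ → ℝ := fun k => c + 2 * Real.sin (π * k) ^ 2 with hh_def
  have hpos : ∀ k, 0 < h k := fun k => by
    have : 0 ≤ 2 * Real.sin (π * k) ^ 2 := by positivity
    simp only [hh_def]; linarith
  have hsq : ∀ k, Real.sqrt (h k) ≠ 0 := fun k => (Real.sqrt_pos.mpr (hpos k)).ne'
  set s : ℝ → ℝ := fun k => 2 * Real.sin (π * k) * Real.cos (π * k) with hs_def
  -- compute the derivative of ω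
  have hωe : ω = fun k => Real.sqrt (h k) := funext fun k => hω k
  have hderiv : ∀ k, deriv ω k = π * s k / Real.sqrt (h k) := by
    intro k
    have h1 : HasDerivAt (fun k : ℝ => π * k) π k := by
      simpa using (hasDerivAt_id k).const_mul π
    have h2 : HasDerivAt (fun k : ℝ => Real.sin (π * k)) (Real.cos (π * k) * π) k :=
      (Real.hasDerivAt_sin (π * k)).comp k h1
    have h3 : HasDerivAt h
        (2 * ((2 : ℕ) * Real.sin (π * k) ^ 1 * (Real.cos (π * k) * π))) k :=
      ((h2.pow 2).const_mul 2).const_add c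
    have h4 := h3.sqrt (hpos k).ne'
    rw [hωe, h4.deriv]
    have h5 := hsq k
    field_simp [hs_def]
    ring
  by_cases ha0 : a = 0
  · -- then σ = -1, and the set is contained in {0, 1/2}
    have hσ' : σ = -1 := by
      rcases hσ with h1 | h1
      · exact absurd ⟨ha0, h1⟩ hne
      · exact h1
    have hfin : ({0, 1/2} : Set ℝ).Finite := (Set.finite_singleton _).insert _
    apply hfin.subset
    rintro k ⟨hk, heq⟩
    rw [hderiv, hderiv, ha0, add_zero, hσ'] at heq
    rw [Set.mem_insert_iff, Set.mem_singleton_iff]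
    have hz : s k = 0 := by
      have hπ := Real.pi_ne_zero
      have h5 := hsq k
      have hX : π * s k / Real.sqrt (h k) = 0 := by linarith
      rcases div_eq_zero_iff.mp hX with h' | h'
      · rcases mul_eq_zero.mp h' with h'' | h''
        · exact absurd h'' hπ
        · exact h''
      · exact absurd h' h5
    have : Real.sin (π * k) = 0 ∨ Real.cos (π * k) = 0 := by
      rcases mul_eq_zero.mp hz with h' | h'
      · rcases mul_eq_zero.mp h' with h'' | h''
        · norm_num at h''
        · exact Or.inl h''
      · exact Or.inr h'
    rcases this with hsin | hcos
    · left
      obtain ⟨n, hn⟩ := Real.sin_eq_zero_iff.mp hsin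
      have hne' : (n : ℝ) = k := mul_right_cancel₀ Real.pi_ne_zero (by linarith [hn, mul_comm (n:ℝ) π])
      have h1 : -(1:ℝ)/2 < (n:ℝ) := hne' ▸ hk.1
      have h2 : (n:ℝ) ≤ 1/2 := hne' ▸ hk.2
      have : n = 0 := by
        have h3 : (-1 : ℝ) < (n : ℝ) := by linarith
        have h4 : (n : ℝ) < 1 := by linarith
        exact_mod_cast by
          have h3' : (-1 : ℤ) < n := by exact_mod_cast h3
          have h4' : n < 1 := by exact_mod_cast h4
          omega
      rw [← hne', this]; norm_num
    · right
      obtain ⟨n, hn⟩ := Real.cos_eq_zero_iff.mp hcos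
      have hk' : k = (2 * n + 1) / 2 := by
        have := Real.pi_ne_zero
        field_simp at hn ⊢
        nlinarith [hn, Real.pi_pos]
      have h1 : -(1:ℝ)/2 < (2 * (n:ℝ) + 1) / 2 := hk' ▸ hk.1
      have h2 : (2 * (n:ℝ) + 1) / 2 ≤ 1/2 := hk' ▸ hk.2
      have : n = 0 := by
        have h3 : (-1 : ℝ) < (n : ℝ) := by linarith
        have h4 : (n : ℝ) < 1 := by linarith
        exact_mod_cast by
          have h3' : (-1 : ℤ) < n := by exact_mod_cast h3
          have h4' : n < 1 := by exact_mod_cast h4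
          omega
      rw [hk', this]
      norm_num
  · -- a ≠ 0 : use the analytic function G
    set G : ℝ → ℝ := fun k => s k ^ 2 * h (k + a) - s (k + a) ^ 2 * h k with hG_def
    have hσ2 : σ ^ 2 = 1 := by rcases hσ with h1 | h1 <;> rw [h1] <;> norm_num
    -- the resonance set is contained in zeros of G
    have hsub : {k : ℝ | k ∈ Ioc (-(1:ℝ)/2) (1/2) ∧ deriv ω k = σ * deriv ω (k + a)}
        ⊆ {k : ℝ | G k = 0} := by
      rintro k ⟨hk, heq⟩
      rw [hderiv, hderiv] at heq
      have hu := hsq k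
      have hv := hsq (k + a)
      have hu2 : Real.sqrt (h k) ^ 2 = h k := Real.sq_sqrt (hpos k).le
      have hv2 : Real.sqrt (h (k + a)) ^ 2 = h (k + a) := Real.sq_sqrt (hpos (k + a)).le
      have e0 : π * s k * Real.sqrt (h (k + a)) = σ * (π * s (k + a)) * Real.sqrt (h k) := by
        field_simp at heq
        linear_combination π * heq
      have e1 := congrArg (· ^ 2) e0
      simp only [mul_pow] at e1
      rw [hu2, hv2, hσ2] at e1
      have hπ2 : (π : ℝ) ^ 2 ≠ 0 := pow_ne_zero _ Real.pi_ne_zero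
      have e2 : s k ^ 2 * h (k + a) = s (k + a) ^ 2 * h k := by
        apply mul_left_cancel₀ hπ2
        linear_combination e1
      simp only [hG_def, Set.mem_setOf_eq]
      linear_combination e2
    -- G is analytic everywhere
    have hGanal : AnalyticOnNhd ℝ G Set.univ := by
      intro x _
      have hsinπ : ∀ y : ℝ, AnalyticAt ℝ (fun k : ℝ => Real.sin (π * k)) y := fun y =>
        (analyticAt_rsin _).comp (analyticAt_const.mul analyticAt_id)
      have hcosπ : ∀ y : ℝ, AnalyticAt ℝ (fun k : ℝ => Real.cos (π * k)) y := fun y =>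
        (analyticAt_rcos _).comp (analyticAt_const.mul analyticAt_id)
      have hsA : ∀ y : ℝ, AnalyticAt ℝ s y := fun y =>
        (analyticAt_const.mul (hsinπ y)).mul (hcosπ y)
      have hhA : ∀ y : ℝ, AnalyticAt ℝ h y := fun y =>
        analyticAt_const.add (analyticAt_const.mul ((hsinπ y).pow 2))
      have hshifts : AnalyticAt ℝ (fun k : ℝ => s (k + a)) x :=
        (hsA _).comp (analyticAt_id.add analyticAt_const)
      have hshifth : AnalyticAt ℝ (fun k : ℝ => h (k + a)) x :=
        (hhA _).comp (analyticAt_id.add analyticAt_const)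
      exact (((hsA x).pow 2).mul hshifth).sub ((hshifts.pow 2).mul (hhA x))
    -- G 0 ≠ 0
    have hG0 : G 0 ≠ 0 := by
      have hs0 : s 0 = 0 := by simp [hs_def]
      have hπa : |π * a| < π / 2 := by
        rw [abs_mul, abs_of_pos Real.pi_pos]
        calc π * |a| < π * (1/2) := by
              exact mul_lt_mul_of_pos_left ha Real.pi_pos
          _ = π / 2 := by ring
      have hπalt := abs_lt.mp hπa
      have hsinπa : Real.sin (π * a) ≠ 0 := by
        intro hsin
        have hπpos := Real.pi_pos
        have := (Real.sin_eq_zero_iff_of_lt_of_lt (by linarith [hπalt.1]) (by linarith [hπalt.2])).mp hsin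
        exact ha0 (by
          have := mul_eq_zero.mp this
          rcases this with h' | h'
          · exact absurd h' Real.pi_ne_zero
          · exact h')
      have hcosπa : Real.cos (π * a) ≠ 0 := by
        have : 0 < Real.cos (π * a) :=
          Real.cos_pos_of_mem_Ioo ⟨by linarith [hπalt.1], hπalt.2⟩
        exact this.ne'
      have hsa : s a ≠ 0 := by
        simp only [hs_def]
        intro hz
        rcases mul_eq_zero.mp hz with h' | h'
        · rcases mul_eq_zero.mp h' with h'' | h''
          · norm_num at h''
          · exact hsinπa h''
        · exact hcosπa h'
      have : G 0 = -(s a ^ 2 * h 0) := by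
        simp only [hG_def, hs0, zero_add]
        ring
      rw [this]
      have h1' : 0 < s a ^ 2 := by positivity
      have h2 : 0 < h 0 := hpos 0
      have : 0 < s a ^ 2 * h 0 := mul_pos h1' h2
      linarith
    -- conclude by the identity theorem
    by_contra hinf
    have hinf' : {k : ℝ | k ∈ Ioc (-(1:ℝ)/2) (1/2) ∧ deriv ω k = σ * deriv ω (k + a)}.Infinite := hinf
    have hsubK : {k : ℝ | k ∈ Ioc (-(1:ℝ)/2) (1/2) ∧ deriv ω k = σ * deriv ω (k + a)}
        ⊆ Icc (-(1:ℝ)/2) (1/2) := fun k hk => Ioc_subset_Icc_self hk.1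
    obtain ⟨x, -, hx⟩ := hinf'.exists_accPt_of_subset_isCompact isCompact_Icc hsubK
    rw [accPt_iff_frequently] at hx
    have hfreq : ∃ᶠ y in nhdsWithin x {x}ᶜ, G y = 0 := by
      rw [frequently_nhdsWithin_iff]
      exact hx.mono fun y hy => ⟨hsub hy.2, hy.1⟩
    have hEq := hGanal.eqOn_zero_of_preconnected_of_frequently_eq_zero
      isPreconnected_univ (Set.mem_univ x) hfreq
    exact hG0 (hEq (Set.mem_univ 0))
end
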